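/- Let B be an n×n real matrix all of whose entries are nonnegative. Then trace(exp B) = n if and only if trace(B^k) = 0 for every integer k ≥ 1. -/

import Mathlib

open NormedSpace Matrix Nat

attribute [local instance] Matrix.linftyOpNormedRing Matrix.linftyOpNormedAlgebra

private lemma pow_entries_nonneg {n : ℕ} (B : Matrix (Fin n) (Fin n) ℝ)
    (hB : ∀ i j, 0 ≤ B i j) : ∀ k : ℕ, 1 ≤ k → ∀ i j, 0 ≤ (B ^ k) i j := by
  intro k hk
  induction k with
  | zero => omega
  | succ k ih =>
    intro i j
    rcases Nat.eq_zero_or_pos k with h | h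
    · subst h; simpa using hB i j
    · rw [pow_succ, Matrix.mul_apply]
      exact Finset.sum_nonneg fun l _ => mul_nonneg (ih h i l) (hB l j)

private lemma trace_pow_nonneg {n : ℕ} (B : Matrix (Fin n) (Fin n) ℝ)
    (hB : ∀ i j, 0 ≤ B i j) (k : ℕ) (hk : 1 ≤ k) : 0 ≤ (B ^ k).trace :=
  Finset.sum_nonneg fun i _ => pow_entries_nonneg B hB k hk i i

/-- If every entry of the `n × n` real matrix `B` is nonnegative, then the trace of
the matrix exponential of `B` equals `n` if and only if the trace of `B ^ k`
vanishes for every `k ≥ 1`. -/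
theorem trace_exp_eq_iff_trace_pow_eq_zero (n : ℕ) (B : Matrix (Fin n) (Fin n) ℝ)
    (hB : ∀ i j, 0 ≤ B i j) :
    (NormedSpace.exp B).trace = (n : ℝ) ↔ ∀ k : ℕ, 1 ≤ k → (B ^ k).trace = 0 := by
  set g : ℕ → ℝ := fun k => ((k ! : ℝ))⁻¹ * (B ^ k).trace with hg
  have hsum : Summable fun k : ℕ => ((k ! : ℝ))⁻¹ • B ^ k :=
    expSeries_summable' (𝕂 := ℝ) B
  have hgsum : Summable g := by
    have := hsum.map (Matrix.traceLinearMap (Fin n) ℝ ℝ).toAddMonoidHom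
      (Continuous.matrix_trace continuous_id)
    simpa [hg, Function.comp_def, Matrix.trace_smul, smul_eq_mul] using this
  have htr : (exp B).trace = ∑' k : ℕ, g k := by
    rw [exp_eq_tsum ℝ]
    have := (hsum.hasSum.map (Matrix.traceLinearMap (Fin n) ℝ ℝ).toAddMonoidHom
      (Continuous.matrix_trace continuous_id)).tsum_eq
    simpa [hg, Function.comp_def, Matrix.trace_smul, smul_eq_mul] using this.symm
  have hg0 : g 0 = (n : ℝ) := by simp [hg, Matrix.trace_one]
  have hgnonneg : ∀ k, 1 ≤ k → 0 ≤ g k := fun k hk =>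
    mul_nonneg (by positivity) (trace_pow_nonneg B hB k hk)
  rw [htr]
  constructor
  · intro h k hk
    have hle : g 0 + g k ≤ ∑' j, g j := by
      have : ∑ j ∈ ({0, k} : Finset ℕ), g j ≤ ∑' j, g j := by
        refine Summable.sum_le_tsum _ (fun j hj => ?_) hgsum
        have hj1 : 1 ≤ j := by
          simp only [Finset.mem_insert, Finset.mem_singleton] at hj
          omega
        exact hgnonneg j hj1
      rwa [Finset.sum_pair (by omega)] at this
    rw [h, hg0] at hle
    have hgk : g k = 0 := le_antisymm (by linarith) (hgnonneg k hk)
    have hne : ((k ! : ℝ))⁻¹ ≠ 0 := by positivity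
    exact (mul_eq_zero.mp hgk).resolve_left hne
  · intro h
    rw [tsum_eq_single 0 (fun k hk => by
      have : (B ^ k).trace = 0 := h k (Nat.one_le_iff_ne_zero.mpr hk)
      simp [hg, this])]
    exact hg0
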